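/- arXiv:0908.0898 — 2 statements merged into one kernel-verified Lean document; each statement's English description precedes it below -/
import Mathlib

section
/- Let X be a Poisson random variable with parameter λ > 0, and let x be a natural number with x > λ. Then P(X ≥ x) = ∑_{k=x}^∞ e^{−λ} λ^k / k! ≤ e^{−λ} (e λ)^x / x^x. -/
open Real MeasureTheory

/-- Chernoff bound for a Poisson random variable `X` of parameter `λ > 0`:
for a natural number `x > λ`,
`P(X ≥ x) = ∑_{k=x}^∞ e^{−λ} λ^k / k! ≤ e^{−λ} (e λ)^x / x^x`. -/
theorem stmt_3 {Ω : Type*} [MeasurableSpace Ω] (μ : Measure Ω) [IsProbabilityMeasure μ]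
    (X : Ω → ℕ) (hX : Measurable X) (lam : ℝ) (hlam : 0 < lam)
    (hpmf : ∀ k : ℕ, (μ (X ⁻¹' {k})).toReal = Real.exp (-lam) * lam ^ k / (Nat.factorial k))
    (x : ℕ) (hx : lam < x) :
    (μ {ω | x ≤ X ω}).toReal
        = ∑' k : ℕ, (if x ≤ k then Real.exp (-lam) * lam ^ k / (Nat.factorial k) else 0) ∧
    (μ {ω | x ≤ X ω}).toReal ≤ Real.exp (-lam) * (Real.exp 1 * lam) ^ x / (x : ℝ) ^ x := by
  have hxpos : (0 : ℝ) < x := lt_trans hlam hx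
  set S : Set ℕ := {k | x ≤ k} with hS
  set f : ℕ → ℝ := fun k => if x ≤ k then Real.exp (-lam) * lam ^ k / (Nat.factorial k) else 0
    with hf
  -- equality part
  have hpre : {ω | x ≤ X ω} = X ⁻¹' S := rfl
  have hunion : X ⁻¹' S = ⋃ k ∈ S, X ⁻¹' {k} := by
    ext ω; simp [S]
  have hmeas : μ {ω | x ≤ X ω} = ∑' k : S, μ (X ⁻¹' {(k : ℕ)}) := by
    rw [hpre, hunion]
    exact measure_biUnion (Set.to_countable S)
      (fun i _ j _ hij => Set.disjoint_iff_inter_eq_empty.2 (by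
        ext ω; simp only [Set.mem_inter_iff, Set.mem_preimage, Set.mem_singleton_iff,
          Set.mem_empty_iff_false, iff_false, not_and]
        intro h1 h2; exact hij (h1 ▸ h2 ▸ rfl)))
      (fun k _ => hX (measurableSet_singleton k))
  have heq : (μ {ω | x ≤ X ω}).toReal = ∑' k : ℕ, f k := by
    rw [hmeas, ENNReal.tsum_toReal_eq (fun a => measure_ne_top μ _)]
    have : ∀ k : S, (μ (X ⁻¹' {(k : ℕ)})).toReal = f (k : ℕ) := by
      rintro ⟨k, hk⟩
      have hk' : x ≤ k := hk
      simp only [hpmf k, hf]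
      rw [if_pos hk']
    rw [tsum_congr this, tsum_subtype S f]
    refine tsum_congr fun k => ?_
    by_cases hk : x ≤ k
    · simp [Set.indicator_apply, S, hk]
    · simp [Set.indicator_apply, S, hk, hf]
  refine ⟨heq, ?_⟩
  -- inequality part
  set g : ℕ → ℝ := fun k => Real.exp (-lam) * (lam / x) ^ x * ((x : ℝ) ^ k / (Nat.factorial k))
    with hg
  have hgsum : HasSum g (Real.exp (-lam) * (lam / x) ^ x * Real.exp x) := by
    apply HasSum.mul_left
    rw [Real.exp_eq_exp_ℝ]
    exact NormedSpace.expSeries_div_hasSum_exp (x : ℝ)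
  have hle : ∀ k, f k ≤ g k := by
    intro k
    simp only [hf, hg]
    by_cases hk : x ≤ k
    · rw [if_pos hk]
      have hxk : x + (k - x) = k := Nat.add_sub_cancel' hk
      have hcore : lam ^ k ≤ (lam / x) ^ x * (x : ℝ) ^ k := by
        calc lam ^ k = lam ^ x * lam ^ (k - x) := by rw [← pow_add, hxk]
          _ ≤ lam ^ x * (x : ℝ) ^ (k - x) := by
              exact mul_le_mul_of_nonneg_left (pow_le_pow_left₀ hlam.le hx.le _) (by positivity)
          _ = (lam / x) ^ x * (x : ℝ) ^ k := by
              rw [div_pow, ← hxk, pow_add]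
              field_simp
              rw [Nat.add_sub_cancel_left]
      calc Real.exp (-lam) * lam ^ k / (Nat.factorial k)
            = Real.exp (-lam) * (lam ^ k / (Nat.factorial k)) := by ring
        _ ≤ Real.exp (-lam) * ((lam / x) ^ x * (x : ℝ) ^ k / (Nat.factorial k)) := by
            gcongr
        _ = Real.exp (-lam) * (lam / x) ^ x * ((x : ℝ) ^ k / (Nat.factorial k)) := by ring
    · rw [if_neg hk]
      positivity
  have hfsum : Summable f := by
    apply Summable.of_nonneg_of_le _ hle hgsum.summable
    intro k; simp only [hf]; split <;> positivity
  rw [heq]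
  calc ∑' k, f k ≤ ∑' k, g k := Summable.tsum_le_tsum hle hfsum hgsum.summable
    _ = Real.exp (-lam) * (lam / x) ^ x * Real.exp x := hgsum.tsum_eq
    _ = Real.exp (-lam) * (Real.exp 1 * lam) ^ x / (x : ℝ) ^ x := by
        rw [mul_pow, ← Real.exp_one_pow, div_pow]
        field_simp
end

section
/- Fix P, N₀, c, f_t > 0, α > 2, and f_e > √2. For a positive integer d define SNR_TR(d) := P (d+1)^{−α} c^{−α} 2^{−α/2} / (N₀ + 8P (f_t d c)^{−α} S(α)), SNR_e(d) := P (f_e d c)^{−α} / N₀, and R(d) := (1/(f_t d)²)(log₂(1 + SNR_TR(d)) − log₂(1 + SNR_e(d))). Then lim_{d→∞} d^{2+α} R(d) = P c^{−α} (2^{−α/2} − f_e^{−α}) / (f_t² N₀ ln 2), and this limit is strictly positive. In particular, with d = d(n) = κ'' log n, R(d(n)) = Ω((log n)^{−2−α}). -/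
open Real Filter Topology

/-- `S(α) = ∑_{i=1}^∞ i · (i − 1/2)^{−α}`, the normalized interference sum. -/
noncomputable def Sval (α : ℝ) : ℝ := ∑' i : ℕ+, (i : ℝ) * ((i : ℝ) - 1 / 2) ^ (-α)

/-- Lower bound on the legitimate receiver's SINR for hop length `d`. -/
noncomputable def SNRtr (P N₀ c ft α : ℝ) (d : ℝ) : ℝ :=
  P * (d + 1) ^ (-α) * c ^ (-α) * (2 : ℝ) ^ (-α / 2) /
    (N₀ + 8 * P * (ft * d * c) ^ (-α) * Sval α)

/-- Upper bound on the eavesdropper's SNR for hop length `d`. -/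
noncomputable def SNRe (P N₀ c fe α : ℝ) (d : ℝ) : ℝ := P * (fe * d * c) ^ (-α) / N₀

/-- Per-hop secure rate for hop length `d`. -/
noncomputable def Rrate (P N₀ c ft fe α : ℝ) (d : ℝ) : ℝ :=
  (1 / (ft * d) ^ 2) *
    (Real.logb 2 (1 + SNRtr P N₀ c ft α d) - Real.logb 2 (1 + SNRe P N₀ c fe α d))

private lemma log_slope : Tendsto (fun x : ℝ => Real.log (1 + x) / x) (𝓝[≠] (0:ℝ)) (𝓝 1) := by
  have h1 : HasDerivAt (fun x : ℝ => 1 + x) 1 0 := (hasDerivAt_id 0).const_add 1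
  have h : HasDerivAt (fun x : ℝ => Real.log (1 + x)) 1 0 := by
    simpa using h1.log (by norm_num)
  have := hasDerivAt_iff_tendsto_slope.1 h
  refine this.congr fun x => ?_
  simp [slope_def_field, slope, div_eq_inv_mul]

private lemma log_ratio {f : ℝ → ℝ} (h0 : Tendsto f atTop (𝓝 0))
    (hpos : ∀ᶠ d in atTop, 0 < f d) :
    Tendsto (fun d => Real.log (1 + f d) / f d) atTop (𝓝 1) := by
  exact log_slope.comp (tendsto_nhdsWithin_iff.2
    ⟨h0, hpos.mono fun d h => by simpa using ne_of_gt h⟩)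

/-- `d^{2+α} R(d) → P c^{−α} (2^{−α/2} − f_e^{−α}) / (f_t² N₀ ln 2) > 0` as `d → ∞`;
in particular, with `d = κ'' log n`, the rate satisfies `R(d(n)) = Ω((log n)^{−2−α})`. -/
theorem stmt_8 (P N₀ c ft : ℝ) (hP : 0 < P) (hN₀ : 0 < N₀) (hc : 0 < c) (hft : 0 < ft)
    (α : ℝ) (hα : 2 < α) (fe : ℝ) (hfe : Real.sqrt 2 < fe) :
    Tendsto (fun d : ℝ => d ^ (2 + α) * Rrate P N₀ c ft fe α d) atTop
      (nhds (P * c ^ (-α) * ((2 : ℝ) ^ (-α / 2) - fe ^ (-α)) / (ft ^ 2 * N₀ * Real.log 2))) ∧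
    0 < P * c ^ (-α) * ((2 : ℝ) ^ (-α / 2) - fe ^ (-α)) / (ft ^ 2 * N₀ * Real.log 2) ∧
    ∀ κ'' : ℝ, 0 < κ'' → ∃ k : ℝ, 0 < k ∧
      ∀ᶠ n : ℕ in atTop,
        k * (Real.log n) ^ (-(2 + α)) ≤ Rrate P N₀ c ft fe α (κ'' * Real.log n) := by
  have hα0 : (0:ℝ) < α := by linarith
  have hfe0 : (0:ℝ) < fe := lt_trans (Real.sqrt_pos.2 two_pos) hfe
  have hlog2 : (0:ℝ) < Real.log 2 := Real.log_pos one_lt_two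
  -- positivity of the limit
  have hdiff : fe ^ (-α) < (2:ℝ) ^ (-α/2) := by
    have h1 : (Real.sqrt 2) ^ (-α) = (2:ℝ) ^ (-α/2) := by
      rw [Real.sqrt_eq_rpow, ← Real.rpow_mul (by norm_num : (0:ℝ) ≤ 2)]
      ring_nf
    rw [← h1]
    exact Real.rpow_lt_rpow_of_neg (Real.sqrt_pos.2 two_pos) hfe (by linarith)
  have hdiff' : (0:ℝ) < (2:ℝ) ^ (-α/2) - fe ^ (-α) := sub_pos.2 hdiff
  have hLpos : 0 < P * c ^ (-α) * ((2 : ℝ) ^ (-α / 2) - fe ^ (-α)) / (ft ^ 2 * N₀ * Real.log 2) := by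
    positivity
  -- the denominator of SNRtr tends to N₀
  set D : ℝ → ℝ := fun d => N₀ + 8 * P * (ft * d * c) ^ (-α) * Sval α with hDdef
  have hmulT : Tendsto (fun d : ℝ => ft * d * c) atTop atTop :=
    (tendsto_id.const_mul_atTop hft).atTop_mul_const hc
  have hftdc0 : Tendsto (fun d : ℝ => (ft * d * c) ^ (-α)) atTop (𝓝 0) :=
    (tendsto_rpow_neg_atTop hα0).comp hmulT
  have hD : Tendsto D atTop (𝓝 N₀) := by
    have := ((hftdc0.const_mul (8 * P)).mul_const (Sval α)).const_add N₀
    simpa [hDdef, mul_assoc] using this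
  have hDpos : ∀ᶠ d in atTop, 0 < D d := hD.eventually (eventually_gt_nhds hN₀)
  -- SNRtr → 0
  have hd1T : Tendsto (fun d : ℝ => d + 1) atTop atTop :=
    tendsto_atTop_add_const_right atTop 1 tendsto_id
  have hnum0 : Tendsto (fun d : ℝ => P * (d + 1) ^ (-α) * c ^ (-α) * (2:ℝ) ^ (-α/2))
      atTop (𝓝 0) := by
    have := (((tendsto_rpow_neg_atTop hα0).comp hd1T).const_mul P).mul_const (c ^ (-α))
    simpa using this.mul_const ((2:ℝ) ^ (-α/2))
  have htr0 : Tendsto (SNRtr P N₀ c ft α) atTop (𝓝 0) := by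
    have := hnum0.div hD hN₀.ne'
    rw [zero_div] at this; exact this
  have htrpos : ∀ᶠ d in atTop, 0 < SNRtr P N₀ c ft α d := by
    filter_upwards [hDpos, eventually_gt_atTop (0:ℝ)] with d hDd hd
    have hnum : 0 < P * (d + 1) ^ (-α) * c ^ (-α) * (2:ℝ) ^ (-α/2) := by positivity
    exact div_pos hnum hDd
  -- d^α * SNRtr → A / N₀
  set A : ℝ := P * c ^ (-α) * (2:ℝ) ^ (-α/2) with hA
  have hq : Tendsto (fun d : ℝ => d / (d + 1)) atTop (𝓝 1) := by
    have hbase : Tendsto (fun d : ℝ => 1 - (d + 1)⁻¹) atTop (𝓝 1) := by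
      have := (tendsto_inv_atTop_zero.comp hd1T).const_sub (1:ℝ)
      simpa using this
    refine hbase.congr' ?_
    filter_upwards [eventually_gt_atTop (0:ℝ)] with d hd
    have : d + 1 ≠ 0 := by linarith
    field_simp
    ring
  have hqα : Tendsto (fun d : ℝ => (d / (d + 1)) ^ α) atTop (𝓝 1) := by
    have := hq.rpow_const (Or.inl one_ne_zero) (p := α)
    simpa using this
  have htrA : Tendsto (fun d : ℝ => d ^ α * SNRtr P N₀ c ft α d) atTop (𝓝 (A / N₀)) := by
    have hg : Tendsto (fun d : ℝ => A * (d / (d + 1)) ^ α / D d) atTop (𝓝 (A * 1 / N₀)) :=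
      (hqα.const_mul A).div hD hN₀.ne'
    rw [mul_one] at hg
    refine hg.congr' ?_
    filter_upwards [eventually_gt_atTop (0:ℝ)] with d hd
    have hd1 : (0:ℝ) < d + 1 := by linarith
    have hsplit : (d / (d + 1)) ^ α = d ^ α * (d + 1) ^ (-α) := by
      rw [Real.div_rpow hd.le hd1.le, Real.rpow_neg hd1.le, div_eq_mul_inv]
    rw [hsplit, SNRtr]
    ring
  -- SNRe → 0, and d^α * SNRe is constant
  set B : ℝ := P * fe ^ (-α) * c ^ (-α) with hB
  have he0 : Tendsto (SNRe P N₀ c fe α) atTop (𝓝 0) := by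
    have hmulT' : Tendsto (fun d : ℝ => fe * d * c) atTop atTop :=
      (tendsto_id.const_mul_atTop hfe0).atTop_mul_const hc
    have h0 : Tendsto (fun d : ℝ => (fe * d * c) ^ (-α)) atTop (𝓝 0) :=
      (tendsto_rpow_neg_atTop hα0).comp hmulT'
    have := (h0.const_mul P).div_const N₀
    rw [mul_zero, zero_div] at this; exact this
  have hepos : ∀ᶠ d in atTop, 0 < SNRe P N₀ c fe α d := by
    filter_upwards [eventually_gt_atTop (0:ℝ)] with d hd
    have : (0:ℝ) < fe * d * c := by positivity
    rw [SNRe]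
    positivity
  have heA : ∀ᶠ d in atTop, d ^ α * SNRe P N₀ c fe α d = B / N₀ := by
    filter_upwards [eventually_gt_atTop (0:ℝ)] with d hd
    have hfact : (fe * d * c) ^ (-α) = fe ^ (-α) * d ^ (-α) * c ^ (-α) := by
      rw [Real.mul_rpow (by positivity) hc.le, Real.mul_rpow hfe0.le hd.le]
    have hdd : d ^ α * d ^ (-α) = 1 := by
      rw [← Real.rpow_add hd]; simp
    have h1 : d ^ α * (P * (fe ^ (-α) * d ^ (-α) * c ^ (-α)) / N₀)
        = (d ^ α * d ^ (-α)) * (P * fe ^ (-α) * c ^ (-α) / N₀) := by ring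
    rw [SNRe, hfact, h1, hdd, one_mul, hB]
  have heB : Tendsto (fun d : ℝ => d ^ α * SNRe P N₀ c fe α d) atTop (𝓝 (B / N₀)) :=
    (tendsto_const_nhds.congr' (heA.mono fun d h => h.symm))
  -- main tendsto
  have hT1 : Tendsto (fun d : ℝ =>
      (Real.log (1 + SNRtr P N₀ c ft α d) / SNRtr P N₀ c ft α d)
        * (d ^ α * SNRtr P N₀ c ft α d)) atTop (𝓝 (1 * (A / N₀))) :=
    (log_ratio htr0 htrpos).mul htrA
  have hT2 : Tendsto (fun d : ℝ =>
      (Real.log (1 + SNRe P N₀ c fe α d) / SNRe P N₀ c fe α d)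
        * (d ^ α * SNRe P N₀ c fe α d)) atTop (𝓝 (1 * (B / N₀))) :=
    (log_ratio he0 hepos).mul heB
  have hG : Tendsto (fun d : ℝ => (1 / ft ^ 2) *
      ((Real.log (1 + SNRtr P N₀ c ft α d) / SNRtr P N₀ c ft α d)
          * (d ^ α * SNRtr P N₀ c ft α d)
        - (Real.log (1 + SNRe P N₀ c fe α d) / SNRe P N₀ c fe α d)
          * (d ^ α * SNRe P N₀ c fe α d)) / Real.log 2) atTop
      (𝓝 ((1 / ft ^ 2) * (1 * (A / N₀) - 1 * (B / N₀)) / Real.log 2)) :=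
    ((hT1.sub hT2).const_mul (1 / ft ^ 2)).div_const (Real.log 2)
  have hval : (1 / ft ^ 2) * (1 * (A / N₀) - 1 * (B / N₀)) / Real.log 2
      = P * c ^ (-α) * ((2 : ℝ) ^ (-α / 2) - fe ^ (-α)) / (ft ^ 2 * N₀ * Real.log 2) := by
    rw [hA, hB]
    field_simp
  have hmain : Tendsto (fun d : ℝ => d ^ (2 + α) * Rrate P N₀ c ft fe α d) atTop
      (nhds (P * c ^ (-α) * ((2 : ℝ) ^ (-α / 2) - fe ^ (-α)) / (ft ^ 2 * N₀ * Real.log 2))) := by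
    rw [← hval]
    refine hG.congr' ?_
    filter_upwards [eventually_gt_atTop (0:ℝ), htrpos, hepos] with d hd htr he
    have htrne : SNRtr P N₀ c ft α d ≠ 0 := htr.ne'
    have hene : SNRe P N₀ c fe α d ≠ 0 := he.ne'
    have hpow : d ^ (2 + α) = d ^ 2 * d ^ α := by
      rw [Real.rpow_add hd, Real.rpow_two]
    rw [Rrate, Real.logb, Real.logb, hpow]
    field_simp
  refine ⟨hmain, hLpos, ?_⟩
  -- part 3
  intro κ hκ
  set L : ℝ := P * c ^ (-α) * ((2 : ℝ) ^ (-α / 2) - fe ^ (-α)) / (ft ^ 2 * N₀ * Real.log 2)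
    with hLdef
  refine ⟨(L / 2) * κ ^ (-(2 + α)), by positivity, ?_⟩
  have h1 : ∀ᶠ d in atTop, L / 2 ≤ d ^ (2 + α) * Rrate P N₀ c ft fe α d :=
    hmain.eventually (eventually_ge_nhds (by linarith))
  obtain ⟨Dv, hDv⟩ := eventually_atTop.1 (h1.and (eventually_ge_atTop (1:ℝ)))
  have hn : Tendsto (fun n : ℕ => κ * Real.log n) atTop atTop :=
    (Real.tendsto_log_atTop.comp tendsto_natCast_atTop_atTop).const_mul_atTop hκ
  filter_upwards [hn.eventually_ge_atTop Dv] with n hn'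
  obtain ⟨hRge, hd1⟩ := hDv (κ * Real.log n) hn'
  have hd0 : (0:ℝ) < κ * Real.log n := lt_of_lt_of_le one_pos hd1
  have hlogn : (0:ℝ) ≤ Real.log n := by nlinarith
  have key : (L / 2) * (κ * Real.log n) ^ (-(2 + α)) ≤ Rrate P N₀ c ft fe α (κ * Real.log n) := by
    have hpow : (0:ℝ) < (κ * Real.log n) ^ (2 + α) := Real.rpow_pos_of_pos hd0 _
    rw [Real.rpow_neg hd0.le, ← div_eq_mul_inv, div_le_iff₀ hpow]
    linarith
  calc (L / 2) * κ ^ (-(2 + α)) * (Real.log n) ^ (-(2 + α))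
      = (L / 2) * (κ * Real.log n) ^ (-(2 + α)) := by
        rw [Real.mul_rpow hκ.le hlogn, mul_assoc]
    _ ≤ _ := key
end
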